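/- Let $e, e', f, f' : \{1,\dots,n\} \to \mathbb{R}$ satisfy $\frac{1}{n}\sum_j e(j) = \frac{1}{n}\sum_j e'(j) = \frac{1}{n}\sum_j f(j) = \frac{1}{n}\sum_j f'(j) = 0$ and the orthonormality relations $\frac{1}{n}\sum_j e(j)e'(j) = \delta$, $\frac{1}{n}\sum_j f(j)f'(j) = \delta'$ with $\delta, \delta' \in \{0,1\}$. For $\pi$ a uniformly random permutation of $\{1,\dots,n\}$ ($n \ge 2$), define $S = \sum_{j=1}^n e(j) f(\pi(j))$ and $S' = \sum_{j=1}^n e'(j) f'(\pi(j))$. Then $\mathrm{Cov}(S, S') = \frac{n^2}{n-1} \delta \delta'$. -/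

import Mathlib

open Finset

private lemma sum_perm_comp {n : ℕ} (σ : Equiv.Perm (Fin n)) (g : Equiv.Perm (Fin n) → ℝ) :
    ∑ π : Equiv.Perm (Fin n), g (π * σ) = ∑ π : Equiv.Perm (Fin n), g π :=
  Fintype.sum_equiv (Equiv.mulRight σ) _ _ (fun _ => rfl)

private lemma sum_single_const {n : ℕ} (f : Fin n → ℝ) (i i' : Fin n) :
    ∑ π : Equiv.Perm (Fin n), f (π i) = ∑ π : Equiv.Perm (Fin n), f (π i') := by
  have := sum_perm_comp (Equiv.swap i i') (fun π => f (π i'))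
  simpa [Equiv.Perm.mul_apply, Equiv.swap_apply_right] using this

private lemma sum_diag_const {n : ℕ} (f f' : Fin n → ℝ) (i i' : Fin n) :
    ∑ π : Equiv.Perm (Fin n), f (π i) * f' (π i)
      = ∑ π : Equiv.Perm (Fin n), f (π i') * f' (π i') := by
  have := sum_perm_comp (Equiv.swap i i') (fun π => f (π i') * f' (π i'))
  simpa [Equiv.Perm.mul_apply, Equiv.swap_apply_right] using this

private lemma sum_off_const {n : ℕ} (f f' : Fin n → ℝ) {i j i' j' : Fin n}
    (hij : i ≠ j) (hij' : i' ≠ j') :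
    ∑ π : Equiv.Perm (Fin n), f (π i) * f' (π j)
      = ∑ π : Equiv.Perm (Fin n), f (π i') * f' (π j') := by
  have hji : Equiv.swap i i' j' ≠ i := by
    intro h
    have h2 : j' = i' := by
      have := congrArg (Equiv.swap i i') h
      simpa using this
    exact hij' h2.symm
  have h1 : (Equiv.swap j (Equiv.swap i i' j') * Equiv.swap i i') i' = i := by
    simp only [Equiv.Perm.mul_apply, Equiv.swap_apply_right]
    exact Equiv.swap_apply_of_ne_of_ne hij (Ne.symm hji)
  have h2 : (Equiv.swap j (Equiv.swap i i' j') * Equiv.swap i i') j' = j := by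
    simp [Equiv.Perm.mul_apply, Equiv.swap_apply_right]
  have key : ∀ π : Equiv.Perm (Fin n),
      f ((π * (Equiv.swap j (Equiv.swap i i' j') * Equiv.swap i i')) i')
        * f' ((π * (Equiv.swap j (Equiv.swap i i' j') * Equiv.swap i i')) j')
      = f (π i) * f' (π j) := by
    intro π
    rw [Equiv.Perm.mul_apply, h1, Equiv.Perm.mul_apply, h2]
  calc ∑ π : Equiv.Perm (Fin n), f (π i) * f' (π j)
      = ∑ π : Equiv.Perm (Fin n),
          f ((π * (Equiv.swap j (Equiv.swap i i' j') * Equiv.swap i i')) i')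
            * f' ((π * (Equiv.swap j (Equiv.swap i i' j') * Equiv.swap i i')) j') :=
        (Finset.sum_congr rfl fun π _ => (key π).symm)
    _ = ∑ π : Equiv.Perm (Fin n), f (π i') * f' (π j') :=
        sum_perm_comp _ (fun π => f (π i') * f' (π j'))

/-- Covariance of two linear permutation statistics built from empirically
centered, pairwise orthonormal score functions equals `n²/(n-1) · δ δ'`. -/
theorem stmt10 (n : ℕ) (hn : 2 ≤ n) (e e' f f' : Fin n → ℝ) (δ δ' : ℝ)
    (hδ : δ = 0 ∨ δ = 1) (hδ' : δ' = 0 ∨ δ' = 1)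
    (he : (1 / n : ℝ) * ∑ j, e j = 0) (he' : (1 / n : ℝ) * ∑ j, e' j = 0)
    (hf : (1 / n : ℝ) * ∑ j, f j = 0) (hf' : (1 / n : ℝ) * ∑ j, f' j = 0)
    (hee' : (1 / n : ℝ) * ∑ j, e j * e' j = δ)
    (hff' : (1 / n : ℝ) * ∑ j, f j * f' j = δ')
    (S S' : Equiv.Perm (Fin n) → ℝ)
    (hS : ∀ π, S π = ∑ j, e j * f (π j))
    (hS' : ∀ π, S' π = ∑ j, e' j * f' (π j)) :
    ((Nat.factorial n : ℝ))⁻¹ * (∑ π : Equiv.Perm (Fin n), S π * S' π) -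
      (((Nat.factorial n : ℝ))⁻¹ * ∑ π : Equiv.Perm (Fin n), S π) *
      (((Nat.factorial n : ℝ))⁻¹ * ∑ π : Equiv.Perm (Fin n), S' π) =
      (n ^ 2 / (n - 1) : ℝ) * δ * δ' := by
  have hn0 : (n : ℝ) ≠ 0 := by
    exact Nat.cast_ne_zero.2 (by omega)
  have hn2 : (2 : ℝ) ≤ (n : ℝ) := by exact_mod_cast hn
  have hn1 : (n : ℝ) - 1 ≠ 0 := by linarith
  have hfac : ((n.factorial : ℝ)) ≠ 0 := Nat.cast_ne_zero.2 n.factorial_ne_zero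
  have clean : ∀ x : ℝ, (1 / n : ℝ) * x = 0 → x = 0 := by
    intro x hx
    rcases mul_eq_zero.1 hx with h | h
    · exact absurd h (one_div_ne_zero hn0)
    · exact h
  have hesum : ∑ j, e j = 0 := clean _ he
  have he'sum : ∑ j, e' j = 0 := clean _ he'
  have hfsum : ∑ j, f j = 0 := clean _ hf
  have hf'sum : ∑ j, f' j = 0 := clean _ hf'
  have hA : ∑ k, f k * f' k = (n : ℝ) * δ' := by
    rw [← hff']; field_simp
  have hE : ∑ k, e k * e' k = (n : ℝ) * δ := by
    rw [← hee']; field_simp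
  -- every single-coordinate sum over permutations vanishes
  have hU : ∀ (g : Fin n → ℝ), (∑ k, g k = 0) → ∀ j : Fin n,
      ∑ π : Equiv.Perm (Fin n), g (π j) = 0 := by
    intro g hg j
    have hmain : (n : ℝ) * ∑ π : Equiv.Perm (Fin n), g (π j) = 0 := by
      calc (n : ℝ) * ∑ π : Equiv.Perm (Fin n), g (π j)
          = ∑ _k : Fin n, ∑ π : Equiv.Perm (Fin n), g (π j) := by
            rw [Finset.sum_const, Finset.card_univ, Fintype.card_fin, nsmul_eq_mul]
        _ = ∑ k : Fin n, ∑ π : Equiv.Perm (Fin n), g (π k) :=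
            Finset.sum_congr rfl fun k _ => (sum_single_const g k j).symm
        _ = ∑ π : Equiv.Perm (Fin n), ∑ k : Fin n, g (π k) := Finset.sum_comm
        _ = ∑ _π : Equiv.Perm (Fin n), ∑ k, g k :=
            Finset.sum_congr rfl fun π _ => Equiv.sum_comp π g
        _ = 0 := by simp [hg]
    exact (mul_eq_zero.1 hmain).resolve_left hn0
  -- expectations of S and S' vanish
  have hES : ∑ π : Equiv.Perm (Fin n), S π = 0 := by
    calc ∑ π : Equiv.Perm (Fin n), S π
        = ∑ π : Equiv.Perm (Fin n), ∑ j, e j * f (π j) :=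
          Finset.sum_congr rfl fun π _ => hS π
      _ = ∑ j, ∑ π : Equiv.Perm (Fin n), e j * f (π j) := Finset.sum_comm
      _ = ∑ j, e j * ∑ π : Equiv.Perm (Fin n), f (π j) := by
          simp [Finset.mul_sum]
      _ = 0 := by simp [hU f hfsum]
  have hES' : ∑ π : Equiv.Perm (Fin n), S' π = 0 := by
    calc ∑ π : Equiv.Perm (Fin n), S' π
        = ∑ π : Equiv.Perm (Fin n), ∑ j, e' j * f' (π j) :=
          Finset.sum_congr rfl fun π _ => hS' π
      _ = ∑ j, ∑ π : Equiv.Perm (Fin n), e' j * f' (π j) := Finset.sum_comm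
      _ = ∑ j, e' j * ∑ π : Equiv.Perm (Fin n), f' (π j) := by
          simp [Finset.mul_sum]
      _ = 0 := by simp [hU f' hf'sum]
  -- the two constants
  set i₀ : Fin n := ⟨0, by omega⟩ with hi₀
  set j₀ : Fin n := ⟨1, by omega⟩ with hj₀
  have hij₀ : i₀ ≠ j₀ := by
    intro h
    have := congrArg Fin.val h
    simp [hi₀, hj₀] at this
  set c₁ : ℝ := ∑ π : Equiv.Perm (Fin n), f (π i₀) * f' (π i₀) with hc₁def
  set c₂ : ℝ := ∑ π : Equiv.Perm (Fin n), f (π i₀) * f' (π j₀) with hc₂def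
  have hdiag : ∀ i : Fin n, ∑ π : Equiv.Perm (Fin n), f (π i) * f' (π i) = c₁ :=
    fun i => sum_diag_const f f' i i₀
  have hoff : ∀ i j : Fin n, i ≠ j →
      ∑ π : Equiv.Perm (Fin n), f (π i) * f' (π j) = c₂ :=
    fun i j h => sum_off_const f f' h hij₀
  have hc1 : (n : ℝ) * c₁ = (n.factorial : ℝ) * ((n : ℝ) * δ') := by
    calc (n : ℝ) * c₁ = ∑ _k : Fin n, c₁ := by
          rw [Finset.sum_const, Finset.card_univ, Fintype.card_fin, nsmul_eq_mul]
      _ = ∑ k : Fin n, ∑ π : Equiv.Perm (Fin n), f (π k) * f' (π k) :=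
          Finset.sum_congr rfl fun k _ => (hdiag k).symm
      _ = ∑ π : Equiv.Perm (Fin n), ∑ k : Fin n, f (π k) * f' (π k) := Finset.sum_comm
      _ = ∑ _π : Equiv.Perm (Fin n), ∑ k, f k * f' k :=
          Finset.sum_congr rfl fun π _ => Equiv.sum_comp π (fun k => f k * f' k)
      _ = (n.factorial : ℝ) * ((n : ℝ) * δ') := by
          rw [Finset.sum_const, Finset.card_univ, Fintype.card_perm, Fintype.card_fin,
            nsmul_eq_mul, hA]
  have htot : (n : ℝ) * c₁ + (n : ℝ) * ((n : ℝ) - 1) * c₂ = 0 := by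
    have hzero : ∑ i : Fin n, ∑ j : Fin n,
        ∑ π : Equiv.Perm (Fin n), f (π i) * f' (π j) = 0 := by
      calc ∑ i : Fin n, ∑ j : Fin n, ∑ π : Equiv.Perm (Fin n), f (π i) * f' (π j)
          = ∑ i : Fin n, ∑ π : Equiv.Perm (Fin n), ∑ j : Fin n, f (π i) * f' (π j) :=
            Finset.sum_congr rfl fun i _ => Finset.sum_comm
        _ = ∑ π : Equiv.Perm (Fin n), ∑ i : Fin n, ∑ j : Fin n, f (π i) * f' (π j) :=
            Finset.sum_comm
        _ = ∑ π : Equiv.Perm (Fin n),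
              (∑ i : Fin n, f (π i)) * (∑ j : Fin n, f' (π j)) := by
            refine Finset.sum_congr rfl fun π _ => ?_
            rw [Finset.sum_mul_sum]
        _ = 0 := by
            refine Finset.sum_eq_zero fun π _ => ?_
            rw [Equiv.sum_comp π f, hfsum, zero_mul]
    have hsplit : ∑ i : Fin n, ∑ j : Fin n,
        ∑ π : Equiv.Perm (Fin n), f (π i) * f' (π j)
        = (n : ℝ) * c₁ + (n : ℝ) * ((n : ℝ) - 1) * c₂ := by
      have hrow : ∀ i : Fin n,
          ∑ j : Fin n, ∑ π : Equiv.Perm (Fin n), f (π i) * f' (π j)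
            = c₁ + ((n : ℝ) - 1) * c₂ := by
        intro i
        rw [← Finset.add_sum_erase _ _ (Finset.mem_univ i), hdiag i]
        congr 1
        calc ∑ j ∈ Finset.univ.erase i, ∑ π : Equiv.Perm (Fin n), f (π i) * f' (π j)
            = ∑ j ∈ Finset.univ.erase i, c₂ := by
              refine Finset.sum_congr rfl fun j hj => ?_
              exact hoff i j (Ne.symm (Finset.ne_of_mem_erase hj))
          _ = ((n : ℝ) - 1) * c₂ := by
              rw [Finset.sum_const, Finset.card_erase_of_mem (Finset.mem_univ i),
                Finset.card_univ, Fintype.card_fin, nsmul_eq_mul]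
              congr 1
              have : (1 : ℕ) ≤ n := by omega
              push_cast [Nat.cast_sub this]
              ring
      calc ∑ i : Fin n, ∑ j : Fin n, ∑ π : Equiv.Perm (Fin n), f (π i) * f' (π j)
          = ∑ _i : Fin n, (c₁ + ((n : ℝ) - 1) * c₂) :=
            Finset.sum_congr rfl fun i _ => hrow i
        _ = (n : ℝ) * (c₁ + ((n : ℝ) - 1) * c₂) := by
            rw [Finset.sum_const, Finset.card_univ, Fintype.card_fin, nsmul_eq_mul]
        _ = (n : ℝ) * c₁ + (n : ℝ) * ((n : ℝ) - 1) * c₂ := by ring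
    rw [← hsplit, hzero]
  -- main second-moment computation
  have hSS : ∑ π : Equiv.Perm (Fin n), S π * S' π
      = ((n : ℝ) * δ) * c₁ - ((n : ℝ) * δ) * c₂ := by
    calc ∑ π : Equiv.Perm (Fin n), S π * S' π
        = ∑ π : Equiv.Perm (Fin n),
            (∑ i, e i * f (π i)) * (∑ j, e' j * f' (π j)) :=
          Finset.sum_congr rfl fun π _ => by rw [hS π, hS' π]
      _ = ∑ π : Equiv.Perm (Fin n), ∑ i : Fin n, ∑ j : Fin n,
            (e i * e' j) * (f (π i) * f' (π j)) := by
          refine Finset.sum_congr rfl fun π _ => ?_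
          rw [Finset.sum_mul_sum]
          exact Finset.sum_congr rfl fun i _ => Finset.sum_congr rfl fun j _ => by ring
      _ = ∑ i : Fin n, ∑ j : Fin n, ∑ π : Equiv.Perm (Fin n),
            (e i * e' j) * (f (π i) * f' (π j)) := by
          rw [Finset.sum_comm]
          exact Finset.sum_congr rfl fun i _ => Finset.sum_comm
      _ = ∑ i : Fin n, ∑ j : Fin n,
            (e i * e' j) * ∑ π : Equiv.Perm (Fin n), f (π i) * f' (π j) := by
          simp [Finset.mul_sum]
      _ = ((n : ℝ) * δ) * c₁ - ((n : ℝ) * δ) * c₂ := by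
          have hrow : ∀ i : Fin n,
              ∑ j : Fin n, (e i * e' j) * ∑ π : Equiv.Perm (Fin n), f (π i) * f' (π j)
                = (e i * e' i) * c₁ - (e i * e' i) * c₂ := by
            intro i
            rw [← Finset.add_sum_erase _ _ (Finset.mem_univ i), hdiag i]
            have : ∑ j ∈ Finset.univ.erase i,
                (e i * e' j) * ∑ π : Equiv.Perm (Fin n), f (π i) * f' (π j)
                = ∑ j ∈ Finset.univ.erase i, (e i * e' j) * c₂ := by
              refine Finset.sum_congr rfl fun j hj => ?_
              rw [hoff i j (Ne.symm (Finset.ne_of_mem_erase hj))]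
            rw [this, ← Finset.sum_mul, Finset.sum_erase_eq_sub (Finset.mem_univ i)]
            rw [← Finset.mul_sum, he'sum]
            ring
          calc ∑ i : Fin n, ∑ j : Fin n,
                (e i * e' j) * ∑ π : Equiv.Perm (Fin n), f (π i) * f' (π j)
              = ∑ i : Fin n, ((e i * e' i) * c₁ - (e i * e' i) * c₂) :=
                Finset.sum_congr rfl fun i _ => hrow i
            _ = (∑ i, e i * e' i) * c₁ - (∑ i, e i * e' i) * c₂ := by
                rw [Finset.sum_sub_distrib, ← Finset.sum_mul, ← Finset.sum_mul]
            _ = ((n : ℝ) * δ) * c₁ - ((n : ℝ) * δ) * c₂ := by rw [hE]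
  rw [hES, hES', hSS]
  field_simp
  linear_combination ((n.factorial : ℝ) * (n : ℝ) * δ) * hc1 - ((n.factorial : ℝ) * δ) * htot
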